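/- Let c₁, c₄ ∈ ℝ, and define k : ℝ → ℝ by k(s) = 4·e^{2(c₄+s)}/((c₁ − e^{2(c₄+s)})² + 4). Then k is positive, non-constant, and satisfies (3/4)·k'(s)² − (1/2)·k''(s)·k(s) − k(s)⁴ − k(s)² = 0 for every s ∈ ℝ. -/

import Mathlib

/-- On a hyperbolic surface (K = −1), `k(s) = 4e^{2(c₄+s)}/((c₁ − e^{2(c₄+s)})² + 4)`
is positive, non-constant and satisfies `(3/4)k'² − (1/2)k'' k − k⁴ − k² = 0`. -/
theorem stmt_7 (c₁ c₄ : ℝ)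
    (k : ℝ → ℝ)
    (hk : k = fun s => 4 * Real.exp (2 * (c₄ + s)) /
      ((c₁ - Real.exp (2 * (c₄ + s))) ^ 2 + 4)) :
    (∀ s, 0 < k s) ∧ (∃ s t : ℝ, k s ≠ k t) ∧
      ∀ s, 3 / 4 * (deriv k s) ^ 2 - 1 / 2 * deriv (deriv k) s * k s
        - (k s) ^ 4 - (k s) ^ 2 = 0 := by
  set e : ℝ → ℝ := fun s => Real.exp (2 * (c₄ + s)) with he_def
  have hepos : ∀ s, 0 < e s := fun s => Real.exp_pos _
  set D : ℝ → ℝ := fun s => (c₁ - e s) ^ 2 + 4 with hD_def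
  have hDpos : ∀ s, 0 < D s := by
    intro s; have := hepos s; simp only [hD_def]; positivity
  have hDne : ∀ s, D s ≠ 0 := fun s => ne_of_gt (hDpos s)
  have hE : ∀ s, HasDerivAt e (2 * e s) s := by
    intro s
    have h1 : HasDerivAt (fun s : ℝ => 2 * (c₄ + s)) 2 s := by
      simpa using ((hasDerivAt_id s).const_add c₄).const_mul 2
    simpa [he_def, mul_comm, Function.comp_def] using (Real.hasDerivAt_exp (2 * (c₄ + s))).comp s h1
  have hDder : ∀ s, HasDerivAt D (2 * (c₁ - e s) ^ 1 * -(2 * e s)) s := by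
    intro s
    have := (((hE s).const_sub c₁).pow 2).add_const 4
    simpa [hD_def] using this
  have hk' : ∀ s, HasDerivAt k
      ((8 * e s * D s + 16 * (e s) ^ 2 * (c₁ - e s)) / (D s) ^ 2) s := by
    intro s
    have h : HasDerivAt (fun y => 4 * e y / D y) _ s := ((hE s).const_mul 4).div (hDder s) (hDne s)
    have hkk : k = fun s => 4 * e s / D s := by rw [hk]
    rw [hkk]
    convert h using 1
    ring
  have hdk : deriv k = fun s => (8 * e s * D s + 16 * (e s) ^ 2 * (c₁ - e s)) / (D s) ^ 2 :=
    funext fun s => (hk' s).deriv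
  have hk'' : ∀ s, HasDerivAt (deriv k)
      (((16 * e s * D s + 32 * (e s) ^ 2 * (c₁ - e s) - 32 * (e s) ^ 3) * D s
        - 2 * (8 * e s * D s + 16 * (e s) ^ 2 * (c₁ - e s)) * (-4 * e s * (c₁ - e s)))
        / (D s) ^ 3) s := by
    intro s
    have hnum : HasDerivAt (fun s => 8 * e s * D s + 16 * (e s) ^ 2 * (c₁ - e s))
        ((8 * (2 * e s)) * D s + (8 * e s) * (2 * (c₁ - e s) ^ 1 * -(2 * e s))
          + ((16 * (2 * (e s) ^ 1 * (2 * e s))) * (c₁ - e s)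
            + (16 * (e s) ^ 2) * -(2 * e s))) s := by
      have hA : HasDerivAt (fun s => 8 * e s) (8 * (2 * e s)) s := (hE s).const_mul 8
      have hAB := hA.mul (hDder s)
      have hC : HasDerivAt (fun s => 16 * (e s) ^ 2) (16 * (2 * (e s) ^ 1 * (2 * e s))) s :=
        ((hE s).pow 2).const_mul 16
      have hCm := hC.mul ((hE s).const_sub c₁)
      simpa [Pi.mul_def, Pi.add_def] using hAB.add hCm
    have hden : HasDerivAt (fun s => (D s) ^ 2) (2 * (D s) ^ 1 * (2 * (c₁ - e s) ^ 1 * -(2 * e s))) s :=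
      (hDder s).pow 2
    have h : HasDerivAt (fun y => (8 * e y * D y + 16 * (e y) ^ 2 * (c₁ - e y)) / (D y) ^ 2) _ s :=
      hnum.div hden (pow_ne_zero 2 (hDne s))
    rw [hdk]
    convert h using 1
    have := hDne s
    rw [div_eq_div_iff (pow_ne_zero 3 this) (pow_ne_zero 2 (pow_ne_zero 2 this))]
    ring
  refine ⟨?_, ?_, ?_⟩
  · intro s
    rw [hk]
    have := hepos s
    have := hDpos s
    positivity
  · have hk0 : 0 < k 0 := by
      rw [hk]; have := hepos 0; have := hDpos 0; simp only; positivity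
    refine ⟨0, -c₄ + Real.log (k 0 / 2) / 2, ?_⟩
    set t : ℝ := -c₄ + Real.log (k 0 / 2) / 2 with ht
    have hEt : Real.exp (2 * (c₄ + t)) = k 0 / 2 := by
      have : 2 * (c₄ + t) = Real.log (k 0 / 2) := by rw [ht]; ring
      rw [this, Real.exp_log (by positivity)]
    have hkt : k t < k 0 := by
      have hkk : k t = 4 * (k 0 / 2) / ((c₁ - k 0 / 2) ^ 2 + 4) := by
        conv_lhs => rw [hk]
        simp only
        rw [hEt]
      rw [hkk]
      have hq : (0:ℝ) < (c₁ - k 0 / 2) ^ 2 + 4 := by positivity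
      rw [div_lt_iff₀ hq]
      nlinarith [sq_nonneg (c₁ - k 0 / 2)]
    exact ne_of_gt hkt
  · intro s
    have h1 : k s = 4 * e s / D s := by rw [hk]
    have h2 : deriv k s = (8 * e s * D s + 16 * (e s) ^ 2 * (c₁ - e s)) / (D s) ^ 2 := by
      rw [hdk]
    have h3 : deriv (deriv k) s =
        ((16 * e s * D s + 32 * (e s) ^ 2 * (c₁ - e s) - 32 * (e s) ^ 3) * D s
          - 2 * (8 * e s * D s + 16 * (e s) ^ 2 * (c₁ - e s)) * (-4 * e s * (c₁ - e s)))
          / (D s) ^ 3 := (hk'' s).deriv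
    rw [h1, h2, h3]
    have hDe : D s = (c₁ - e s) ^ 2 + 4 := rfl
    rw [hDe]
    have h4 : (c₁ - e s) ^ 2 + 4 ≠ 0 := by positivity
    field_simp
    ring
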